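/- The generalized Yehia Hamiltonian Ĥ₁ = J₁²+J₂²+2J₃²+2a x₁ − bC₁/x₃² + c/√(x₁²+x₂²) + ((2C₁−x₃²)/x₂²)(d + e x₁/√(x₁²+x₂²)) and the integral Ĥ₂ = (J₁²−J₂²−2ax₁+b(x₁²−x₂²)/x₃²)² + (2J₁J₂−2ax₂+2bx₁x₂/x₃²)² + x₂^{-4}(dx₃² + (cx₂²+ex₃²x₁)/√(x₁²+x₂²))(2x₂²(J₁²+J₂²)+dx₃²+(cx₂²+ex₃²x₁)/√(x₁²+x₂²)) − 4ax₃²(dx₁+e√(x₁²+x₂²))/x₂² − (2b/x₂²)((√(x₁²+x₂²)(cx₂²−ex₃²x₁))/x₃² − dx₁²) satisfy {Ĥ₁, Ĥ₂} = 0 with respect to the Lie–Poisson bracket on e(3)*, on the level set C₂ = x₁J₁+x₂J₂+x₃J₃ = 0. -/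

import Mathlib

noncomputable section

/-- The Levi-Civita symbol `ε_{ijk}` on three indices. -/
def eps (i j k : Fin 3) : ℝ :=
  ((j.val : ℝ) - i.val) * ((k.val : ℝ) - j.val) * ((k.val : ℝ) - i.val) / 2

/-- Phase space e(3)* with coordinates `z = (J, x)`. -/
abbrev E3 := (Fin 3 → ℝ) × (Fin 3 → ℝ)

/-- Partial derivative in the direction of `Jᵢ`. -/
def pJ (i : Fin 3) (f : E3 → ℝ) (z : E3) : ℝ := fderiv ℝ f z (Pi.single i 1, 0)

/-- Partial derivative in the direction of `xᵢ`. -/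
def px (i : Fin 3) (f : E3 → ℝ) (z : E3) : ℝ := fderiv ℝ f z (0, Pi.single i 1)

/-- The Lie–Poisson bracket on e(3)*:
`{J_i,J_j}=ε_{ijk}J_k`, `{J_i,x_j}=ε_{ijk}x_k`, `{x_i,x_j}=0`. -/
def e3br (f g : E3 → ℝ) (z : E3) : ℝ :=
  ∑ i, ∑ j, ∑ k, eps i j k *
    (z.1 k * pJ i f z * pJ j g z
     + z.2 k * (pJ i f z * px j g z + px i f z * pJ j g z))

/-- The generalized Yehia Hamiltonian `Ĥ₁` on e(3)*. -/
def yehiaH1 (a b c d e : ℝ) (w : E3) : ℝ :=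
  (w.1 0) ^ 2 + (w.1 1) ^ 2 + 2 * (w.1 2) ^ 2 + 2 * a * w.2 0
  - b * ((w.2 0) ^ 2 + (w.2 1) ^ 2 + (w.2 2) ^ 2) / (w.2 2) ^ 2
  + c / Real.sqrt ((w.2 0) ^ 2 + (w.2 1) ^ 2)
  + (2 * ((w.2 0) ^ 2 + (w.2 1) ^ 2 + (w.2 2) ^ 2) - (w.2 2) ^ 2) / (w.2 1) ^ 2
    * (d + e * w.2 0 / Real.sqrt ((w.2 0) ^ 2 + (w.2 1) ^ 2))

/-- The second Yehia integral `Ĥ₂` on e(3)*. -/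
def yehiaH2 (a b c d e : ℝ) (w : E3) : ℝ :=
  ((w.1 0) ^ 2 - (w.1 1) ^ 2 - 2 * a * w.2 0
    + b * ((w.2 0) ^ 2 - (w.2 1) ^ 2) / (w.2 2) ^ 2) ^ 2
  + (2 * w.1 0 * w.1 1 - 2 * a * w.2 1
    + 2 * b * w.2 0 * w.2 1 / (w.2 2) ^ 2) ^ 2
  + (1 / (w.2 1) ^ 4)
    * (d * (w.2 2) ^ 2
       + (c * (w.2 1) ^ 2 + e * (w.2 2) ^ 2 * w.2 0)
         / Real.sqrt ((w.2 0) ^ 2 + (w.2 1) ^ 2))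
    * (2 * (w.2 1) ^ 2 * ((w.1 0) ^ 2 + (w.1 1) ^ 2) + d * (w.2 2) ^ 2
       + (c * (w.2 1) ^ 2 + e * (w.2 2) ^ 2 * w.2 0)
         / Real.sqrt ((w.2 0) ^ 2 + (w.2 1) ^ 2))
  - 4 * a * (w.2 2) ^ 2
      * (d * w.2 0 + e * Real.sqrt ((w.2 0) ^ 2 + (w.2 1) ^ 2)) / (w.2 1) ^ 2
  - (2 * b / (w.2 1) ^ 2)
      * (Real.sqrt ((w.2 0) ^ 2 + (w.2 1) ^ 2)
          * (c * (w.2 1) ^ 2 - e * (w.2 2) ^ 2 * w.2 0) / (w.2 2) ^ 2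
         - d * (w.2 0) ^ 2)



section YehiaAux

def LJc (i : Fin 3) : E3 →L[ℝ] ℝ :=
  (ContinuousLinearMap.proj i).comp (ContinuousLinearMap.fst ℝ (Fin 3 → ℝ) (Fin 3 → ℝ))
def Lxc (i : Fin 3) : E3 →L[ℝ] ℝ :=
  (ContinuousLinearMap.proj i).comp (ContinuousLinearMap.snd ℝ (Fin 3 → ℝ) (Fin 3 → ℝ))

@[simp] lemma LJc_apply (i : Fin 3) (v : E3) : LJc i v = v.1 i := rfl
@[simp] lemma Lxc_apply (i : Fin 3) (v : E3) : Lxc i v = v.2 i := rfl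

lemma hasJc (i : Fin 3) (z : E3) : HasFDerivAt (fun w : E3 => w.1 i) (LJc i) z :=
  (LJc i).hasFDerivAt
lemma hasxc (i : Fin 3) (z : E3) : HasFDerivAt (fun w : E3 => w.2 i) (Lxc i) z :=
  (Lxc i).hasFDerivAt

variable {E : Type*} [NormedAddCommGroup E] [NormedSpace ℝ E]
variable {f g : E → ℝ} {f' g' : E →L[ℝ] ℝ} {z : E}

theorem hpowY (hf : HasFDerivAt f f' z) (n : ℕ) :
    HasFDerivAt (fun w => f w ^ n) (((n : ℝ) * f z ^ (n - 1)) • f') z :=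
  (hasDerivAt_pow n (f z)).comp_hasFDerivAt z hf

theorem hdivY (hf : HasFDerivAt f f' z) (hg : HasFDerivAt g g' z) (h : g z ≠ 0) :
    HasFDerivAt (fun w => f w / g w)
      ((g z)⁻¹ • f' + (-(f z) / g z ^ 2) • g') z := by
  have hinv : HasFDerivAt (fun w => (g w)⁻¹) (-(g z ^ 2)⁻¹ • g') z :=
    (hasDerivAt_inv h).comp_hasFDerivAt z hg
  have hm := hf.mul hinv
  simp only [div_eq_mul_inv]
  refine hm.congr_fderiv ?_
  ext v
  simp only [ContinuousLinearMap.add_apply, ContinuousLinearMap.smul_apply, smul_eq_mul]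
  ring

end YehiaAux


set_option maxHeartbeats 4000000 in
/-- On the level set `C₂ = ∑xᵢJᵢ = 0` (and away from the singular loci
`x₂ = 0`, `x₃ = 0`, `x₁²+x₂² = 0`), the Yehia Hamiltonian `Ĥ₁` and its
integral `Ĥ₂` are in involution with respect to the Lie–Poisson bracket on
e(3)*. -/
theorem yehia_involution (a b c d e : ℝ) :
    ∀ z : E3, z.2 1 ≠ 0 → z.2 2 ≠ 0 → (z.2 0) ^ 2 + (z.2 1) ^ 2 ≠ 0 →
      (∑ i, z.2 i * z.1 i) = 0 →
      e3br (yehiaH1 a b c d e) (yehiaH2 a b c d e) z = 0 := by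
  intro z hx1 hx2 hs hC
  have h2 : (z.2 2) ^ 2 ≠ 0 := pow_ne_zero _ hx2
  have h1 : (z.2 1) ^ 2 ≠ 0 := pow_ne_zero _ hx1
  have h14 : (z.2 1) ^ 4 ≠ 0 := pow_ne_zero _ hx1
  have hspos : 0 < (z.2 0) ^ 2 + (z.2 1) ^ 2 := lt_of_le_of_ne (by positivity) (Ne.symm hs)
  have hrne : Real.sqrt ((z.2 0) ^ 2 + (z.2 1) ^ 2) ≠ 0 :=
    ne_of_gt (Real.sqrt_pos.mpr hspos)
  have hJ0 := hasJc 0 z; have hJ1 := hasJc 1 z; have hJ2 := hasJc 2 z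
  have hx0h := hasxc 0 z; have hx1h := hasxc 1 z; have hx2h := hasxc 2 z
  have hC1 := ((hpowY hx0h 2).add (hpowY hx1h 2)).add (hpowY hx2h 2)
  have hsq := HasFDerivAt.sqrt ((hpowY hx0h 2).add (hpowY hx1h 2)) hs
  have hH1 := ((((((hpowY hJ0 2).add (hpowY hJ1 2)).add ((hpowY hJ2 2).const_mul 2)).add
      (hx0h.const_mul (2 * a))).sub
      (hdivY (hC1.const_mul b) (hpowY hx2h 2) h2)).add
      (hdivY (hasFDerivAt_const c z) hsq hrne)).add
      ((hdivY ((hC1.const_mul 2).sub (hpowY hx2h 2)) (hpowY hx1h 2) h1).mul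
        ((hasFDerivAt_const d z).add (hdivY (hx0h.const_mul e) hsq hrne)))
  have hA := ((((hpowY hJ0 2).sub (hpowY hJ1 2)).sub (hx0h.const_mul (2 * a))).add
      (hdivY (((hpowY hx0h 2).sub (hpowY hx1h 2)).const_mul b) (hpowY hx2h 2) h2))
  have hT1 := hpowY hA 2
  have hB := ((((hJ0.const_mul 2).mul hJ1).sub (hx1h.const_mul (2 * a))).add
      (hdivY ((hx0h.const_mul (2 * b)).mul hx1h) (hpowY hx2h 2) h2))
  have hT2 := hpowY hB 2
  have hNum := ((hpowY hx1h 2).const_mul c).add (((hpowY hx2h 2).const_mul e).mul hx0h)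
  have hA3 := ((hpowY hx2h 2).const_mul d).add (hdivY hNum hsq hrne)
  have hB3 := ((((hpowY hx1h 2).const_mul 2).mul ((hpowY hJ0 2).add (hpowY hJ1 2))).add
      ((hpowY hx2h 2).const_mul d)).add (hdivY hNum hsq hrne)
  have hT3 := ((hdivY (hasFDerivAt_const 1 z) (hpowY hx1h 4) h14).mul hA3).mul hB3
  have hT4 := hdivY (((hpowY hx2h 2).const_mul (4 * a)).mul
      ((hx0h.const_mul d).add (hsq.const_mul e))) (hpowY hx1h 2) h1
  have hT5 := (hdivY (hasFDerivAt_const (2 * b) z) (hpowY hx1h 2) h1).mul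
      ((hdivY (hsq.mul (((hpowY hx1h 2).const_mul c).sub
        (((hpowY hx2h 2).const_mul e).mul hx0h))) (hpowY hx2h 2) h2).sub
        ((hpowY hx0h 2).const_mul d))
  have hH2 := (((hT1.add hT2).add hT3).sub hT4).sub hT5
  have hJ2c : z.1 2 = -(z.2 0 * z.1 0 + z.2 1 * z.1 1) / z.2 2 := by
    rw [Fin.sum_univ_three] at hC
    field_simp
    linarith
  simp only [e3br, Fin.sum_univ_three]
  norm_num [eps]
  simp only [pJ, px]
  have e1 : fderiv ℝ (yehiaH1 a b c d e) z = _ := hH1.fderiv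
  have e2 : fderiv ℝ (yehiaH2 a b c d e) z = _ := hH2.fderiv
  rw [e1, e2]
  simp [Pi.single_apply]
  rw [hJ2c]
  set J0 := z.1 0 with hJ0d
  set J1 := z.1 1 with hJ1d
  set x0 := z.2 0 with hx0d
  set x1 := z.2 1 with hx1d
  set x2 := z.2 2 with hx2d
  set r := Real.sqrt (x0 ^ 2 + x1 ^ 2) with hrd
  have hr2 : r ^ 2 = x0 ^ 2 + x1 ^ 2 := Real.sq_sqrt (by positivity)
  field_simp
  linear_combination ((16) * a * e * J0 * x1 ^ 2 * x2 ^ 8 * r ^ 3 + (-8) * b * e * J0 * x0 * x1 ^ 2 * x2 ^ 6 * r ^ 3 + (16) * a * e * J0 * x1 ^ 4 * x2 ^ 6 * r ^ 3 + (-8) * b * c * J0 * x1 ^ 6 * x2 ^ 2 * r ^ 3 + (-4) * b * e * J1 * x1 ^ 3 * x2 ^ 6 * r ^ 3 + (16) * a * e * J1 * x0 * x1 ^ 3 * x2 ^ 6 * r ^ 3 + (8) * b * c * J1 * x0 * x1 ^ 5 * x2 ^ 2 * r ^ 3 + (-8) * b * e * J0 * x0 * x1 ^ 4 * x2 ^ 4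 * r ^ 3 + (-8) * b * e * J1 * x1 ^ 5 * x2 ^ 4 * r ^ 3 + (32) * a * e * J0 * x0 ^ 2 * x1 ^ 2 * x2 ^ 6 * r ^ 3 + (-16) * b * e * J0 * x0 ^ 3 * x1 ^ 2 * x2 ^ 4 * r ^ 3 + (-16) * b * e * J1 * x0 ^ 2 * x1 ^ 3 * x2 ^ 4 * r ^ 3 + (8) * e * J0 ^ 2 * J1 * x0 ^ 2 * x1 ^ 3 * x2 ^ 6 * r + (-8) * e * J0 * J1 ^ 2 * x0 * x1 ^ 4 * x2 ^ 6 * r + (4) * b * c * J0 * x1 ^ 6 * x2 ^ 4 * r + (4) * b * e * J0 * x0 * x1 ^ 4 * x2 ^ 6 * r + (8) * e * J1 ^ 3 * x0 ^ 2 * x1 ^ 3 * x2 ^ 6 * r + (8) * a * e * J1 * x0 * x1 ^ 3 * x2 ^ 8 * r + (-8) * b * e * J1 * x0 ^ 4 * x1 ^ 3 * x2 ^ 4 * r + (-8) * b * e * J1 * x0 ^ 2 * x1 ^ 5 * x2 ^ 4 * r + (8) * b * e * J0 * x0 ^ 3 * x1 ^ 4 * x2 ^ 4 * r + (8) * b *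 e * J0 * x0 * x1 ^ 6 * x2 ^ 4 * r + (8) * d * e * J1 * x0 ^ 2 * x1 * x2 ^ 8 * r + (8) * a * c * J1 * x1 ^ 5 * x2 ^ 6 * r + (-4) * b * c * J1 * x0 * x1 ^ 5 * x2 ^ 4 * r + (-8) * d * e * J0 * x0 * x1 ^ 2 * x2 ^ 8 * r + (-8) * e * J0 ^ 3 * x0 * x1 ^ 4 * x2 ^ 6 * r + (-4) * b * e * J1 * x0 ^ 2 * x1 ^ 3 * x2 ^ 6 * r + (16) * a * e * J1 * x0 ^ 3 * x1 ^ 3 * x2 ^ 6 * r + (16) * a * e * J1 * x0 * x1 ^ 5 * x2 ^ 6 * r + (8) * c * e * J1 * x0 ^ 2 * x1 ^ 3 * x2 ^ 6 + (8) * e ^ 2 * J1 * x0 ^ 3 * x1 * x2 ^ 8 + (-8) * c * e * J0 * x0 * x1 ^ 4 * x2 ^ 6 + (-8) * e ^ 2 * J0 * x0 ^ 2 * x1 ^ 2 * x2 ^ 8) * hr2
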